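/- The set of group-like elements of the Radford algebra H is exactly {g^l | 0 ≤ l < n}; that is, an element h ∈ H satisfies Δ(h) = h ⊗ h and ε(h) = 1 if and only if h = g^l for some 0 ≤ l < n. -/

import Mathlib

open TensorProduct

noncomputable section

/-- The Gaussian (`q`-)binomial coefficient `C(m, k)_q`, defined by the `q`-Pascal
recurrence `C(m+1, k+1)_q = C(m, k)_q + q^(k+1) * C(m, k+1)_q`. -/
def qBinom (q : ℂ) : ℕ → ℕ → ℂ
  | _, 0 => 1
  | 0, _ + 1 => 0
  | m + 1, k + 1 => qBinom q m k + q ^ (k + 1) * qBinom q m (k + 1)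

/-- The Radford algebra: a Hopf algebra `H` over `ℂ` generated by elements
`g, x, y` subject to the relations `g^n = 1`, `x^n = y^n = 0`, `xg = ω g x`,
`g y = ω y g`, `x y = ω y x`, where `ω` is a root of unity of order `n > 1`,
with the comultiplication, counit and antipode determined by
`Δ(g) = g ⊗ g`, `ε(g) = 1`, `S(g) = g^(n-1)`,
`Δ(x) = x ⊗ g + 1 ⊗ x`, `ε(x) = 0`, `S(x) = -x g^(n-1)`,
`Δ(y) = y ⊗ g + 1 ⊗ y`, `ε(y) = 0`, `S(y) = -y g^(n-1)`,
and with canonical `ℂ`-basis `{y^r x^s g^l | 0 ≤ r, s, l < n}`. -/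
structure RadfordAlgebra (n : ℕ) (ω : ℂ) (H : Type*) [Ring H] [HopfAlgebra ℂ H] where
  g : H
  x : H
  y : H
  hn : 1 < n
  hω : IsPrimitiveRoot ω n
  g_pow : g ^ n = 1
  x_pow : x ^ n = 0
  y_pow : y ^ n = 0
  rel_xg : x * g = ω • (g * x)
  rel_gy : g * y = ω • (y * g)
  rel_xy : x * y = ω • (y * x)
  comul_g : Coalgebra.comul (R := ℂ) g = g ⊗ₜ[ℂ] g
  counit_g : Coalgebra.counit (R := ℂ) g = 1
  antipode_g : HopfAlgebra.antipode (R := ℂ) g = g ^ (n - 1)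
  comul_x : Coalgebra.comul (R := ℂ) x = x ⊗ₜ[ℂ] g + 1 ⊗ₜ[ℂ] x
  counit_x : Coalgebra.counit (R := ℂ) x = 0
  antipode_x : HopfAlgebra.antipode (R := ℂ) x = -(x * g ^ (n - 1))
  comul_y : Coalgebra.comul (R := ℂ) y = y ⊗ₜ[ℂ] g + 1 ⊗ₜ[ℂ] y
  counit_y : Coalgebra.counit (R := ℂ) y = 0
  antipode_y : HopfAlgebra.antipode (R := ℂ) y = -(y * g ^ (n - 1))
  gen : Algebra.adjoin ℂ ({g, x, y} : Set H) = ⊤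
  basis : Module.Basis (Fin n × Fin n × Fin n) ℂ H
  basis_eq : ∀ r s l : Fin n, basis (r, s, l) = y ^ (r : ℕ) * x ^ (s : ℕ) * g ^ (l : ℕ)

/-- A `*`-structure on a Hopf algebra `H` over `ℂ`: a conjugate-linear map
`* : H → H` such that `(h*)* = h`, `(hl)* = l* h*`,
`Δ(h*) = Σ (h₁)* ⊗ (h₂)*` and `S(S(h*)*) = h` for all `h, l ∈ H`.
(The condition on `Δ` is expressed via the auxiliary additive map `starTensor`
on `H ⊗[ℂ] H` sending `a ⊗ b` to `a* ⊗ b*`, which is uniquely determined by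
its two defining properties.) -/
structure HopfStarStructure (H : Type*) [Ring H] [HopfAlgebra ℂ H] where
  star : H → H
  star_add : ∀ a b : H, star (a + b) = star a + star b
  star_smul : ∀ (c : ℂ) (a : H), star (c • a) = (starRingEnd ℂ c) • star a
  star_star : ∀ a : H, star (star a) = a
  star_mul : ∀ a b : H, star (a * b) = star b * star a
  starTensor : H ⊗[ℂ] H → H ⊗[ℂ] H
  starTensor_add : ∀ u v : H ⊗[ℂ] H, starTensor (u + v) = starTensor u + starTensor v
  starTensor_tmul : ∀ a b : H, starTensor (a ⊗ₜ[ℂ] b) = star a ⊗ₜ[ℂ] star b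
  comul_star : ∀ a : H,
    Coalgebra.comul (R := ℂ) (star a) = starTensor (Coalgebra.comul (R := ℂ) a)
  antipode_star : ∀ a : H,
    HopfAlgebra.antipode (R := ℂ) (star (HopfAlgebra.antipode (R := ℂ) (star a))) = a

/-- Two `*`-structures `*'` and `*''` on a Hopf algebra `H` over `ℂ` are
equivalent if there is a Hopf algebra automorphism `ψ` of `H` such that
`ψ(h^{*'}) = ψ(h)^{*''}` for all `h ∈ H`. -/
def HopfStarStructure.Equivalent {H : Type*} [Ring H] [HopfAlgebra ℂ H]
    (s₁ s₂ : HopfStarStructure H) : Prop :=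
  ∃ ψ : H ≃ₐc[ℂ] H, ∀ h : H, ψ (s₁.star h) = s₂.star (ψ h)

lemma qBinom_zero (q : ℂ) (m : ℕ) : qBinom q m 0 = 1 := by
  cases m <;> rfl

lemma qBinom_of_lt (q : ℂ) : ∀ {m k : ℕ}, m < k → qBinom q m k = 0 := by
  intro m
  induction m with
  | zero => intro k hk; match k, hk with | k+1, _ => rfl
  | succ m ih =>
    intro k hk
    match k, hk with
    | k+1, hk =>
      show qBinom q m k + q ^ (k+1) * qBinom q m (k+1) = 0
      rw [ih (by omega), ih (by omega)]; ring

lemma qBinom_self (q : ℂ) (m : ℕ) : qBinom q m m = 1 := by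
  induction m with
  | zero => rfl
  | succ m ih =>
    show qBinom q m m + q ^ (m+1) * qBinom q m (m+1) = 1
    rw [ih, qBinom_of_lt q (by omega)]; ring

section qbt
variable {A : Type*} [Ring A] [Algebra ℂ A]

lemma mul_pow_q (q : ℂ) (a b : A) (h : b * a = q • (a * b)) (k : ℕ) :
    b * a ^ k = q ^ k • (a ^ k * b) := by
  induction k with
  | zero => simp
  | succ k ih =>
    rw [pow_succ, ← mul_assoc, ih, smul_mul_assoc, mul_assoc, h, pow_succ]
    rw [mul_smul_comm, smul_smul, mul_assoc]

theorem q_add_pow (q : ℂ) (a b : A) (h : b * a = q • (a * b)) (m : ℕ) :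
    (a + b) ^ m = ∑ k ∈ Finset.range (m + 1), qBinom q m k • (a ^ k * b ^ (m - k)) := by
  induction m with
  | zero => simp [qBinom_zero]
  | succ m ih =>
    rw [pow_succ', ih, Finset.mul_sum]
    have hterm : ∀ k, (a + b) * (qBinom q m k • (a ^ k * b ^ (m - k)))
        = qBinom q m k • (a ^ (k+1) * b ^ (m - k))
          + (q ^ k * qBinom q m k) • (a ^ k * b ^ (m - k + 1)) := by
      intro k
      rw [mul_smul_comm, add_mul, ← mul_assoc, ← pow_succ']
      have : b * (a ^ k * b ^ (m - k)) = q ^ k • (a ^ k * b ^ (m - k + 1)) := by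
        rw [← mul_assoc, mul_pow_q q a b h, smul_mul_assoc, mul_assoc, ← pow_succ']
      rw [this, smul_add, smul_smul]
      ring_nf
    simp_rw [hterm]
    rw [Finset.sum_add_distrib]
    have hq : ∀ k, qBinom q (m+1) (k+1) = qBinom q m k + q ^ (k+1) * qBinom q m (k+1) :=
      fun k => rfl
    rw [Finset.sum_range_succ' (fun k => qBinom q (m+1) k • (a ^ k * b ^ (m + 1 - k))) (m+1)]
    simp_rw [hq, add_smul, Nat.succ_sub_succ]
    rw [Finset.sum_add_distrib]
    rw [Finset.sum_range_succ (fun k => (q ^ (k+1) * qBinom q m (k+1)) • (a ^ (k+1) * b ^ (m - k)))]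
    rw [Finset.sum_range_succ' (fun k => (q ^ k * qBinom q m k) • (a ^ k * b ^ (m - k + 1))) m]
    have hcg : ∀ k ∈ Finset.range m, (q ^ (k+1) * qBinom q m (k+1)) • (a ^ (k+1) * b ^ (m - (k+1) + 1))
        = (q ^ (k+1) * qBinom q m (k+1)) • (a ^ (k+1) * b ^ (m - k)) := by
      intro k hk
      have : m - (k+1) + 1 = m - k := by
        have := Finset.mem_range.mp hk; omega
      rw [this]
    rw [Finset.sum_congr rfl hcg]
    rw [qBinom_of_lt q (Nat.lt_succ_self m), qBinom_zero, qBinom_zero]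
    simp only [pow_zero, one_mul, mul_zero, zero_smul, Nat.sub_zero, one_smul]
    abel
lemma pow_mul_q (q : ℂ) (a b : A) (h : b * a = q • (a * b)) (j : ℕ) :
    b ^ j * a = q ^ j • (a * b ^ j) := by
  induction j with
  | zero => simp
  | succ j ih =>
    rw [pow_succ, mul_assoc, h, mul_smul_comm, ← mul_assoc, ih, smul_mul_assoc,
      smul_smul, mul_assoc, ← pow_succ']

end qbt


namespace RadfordAlgebra

variable {n : ℕ} {ω : ℂ} {H : Type*} [Ring H] [HopfAlgebra ℂ H] (R : RadfordAlgebra n ω H)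

lemma npos (R : RadfordAlgebra n ω H) : 0 < n := Nat.lt_of_lt_of_le Nat.zero_lt_one (R.hn).le

lemma omega_ne_zero (R : RadfordAlgebra n ω H) : ω ≠ 0 := (R.hω).ne_zero (Nat.pos_iff_ne_zero.mp R.npos)

lemma g_pow_mod (m : ℕ) : R.g ^ m = R.g ^ (m % n) := by
  conv_lhs => rw [← Nat.div_add_mod m n]
  rw [pow_add, pow_mul, R.g_pow, one_pow, one_mul]

lemma gy : R.g * R.y = ω • (R.y * R.g) := R.rel_gy

lemma gx : R.g * R.x = ω⁻¹ • (R.x * R.g) := by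
  have := R.rel_xg
  rw [this, smul_smul, inv_mul_cancel₀ R.omega_ne_zero, one_smul]

lemma gpow_ypow (a b : ℕ) : R.g ^ a * R.y ^ b = ω ^ (a * b) • (R.y ^ b * R.g ^ a) := by
  have h1 : R.g * R.y ^ b = (ω ^ b) • (R.y ^ b * R.g) := mul_pow_q ω R.y R.g R.gy b
  have h2 := pow_mul_q (ω ^ b) (R.y ^ b) R.g h1 a
  rw [h2, ← pow_mul, mul_comm b a]

lemma gpow_xpow (a b : ℕ) : R.g ^ a * R.x ^ b = (ω⁻¹) ^ (a * b) • (R.x ^ b * R.g ^ a) := by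
  have h1 : R.g * R.x ^ b = (ω⁻¹ ^ b) • (R.x ^ b * R.g) := mul_pow_q ω⁻¹ R.x R.g R.gx b
  have h2 := pow_mul_q (ω⁻¹ ^ b) (R.x ^ b) R.g h1 a
  rw [h2, ← pow_mul, mul_comm b a]

lemma comul_gpow (l : ℕ) :
    Coalgebra.comul (R := ℂ) (R.g ^ l) = (R.g ^ l) ⊗ₜ[ℂ] (R.g ^ l) := by
  rw [Bialgebra.comul_pow, R.comul_g, Algebra.TensorProduct.tmul_pow]

lemma comul_xpow (s : ℕ) :
    Coalgebra.comul (R := ℂ) (R.x ^ s) =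
      ∑ k ∈ Finset.range (s + 1),
        qBinom ω s k • ((R.x ^ k) ⊗ₜ[ℂ] (R.g ^ k * R.x ^ (s - k))) := by
  rw [Bialgebra.comul_pow, R.comul_x]
  have hcomm : ((1 : H) ⊗ₜ[ℂ] R.x) * (R.x ⊗ₜ[ℂ] R.g) =
      ω • ((R.x ⊗ₜ[ℂ] R.g) * ((1 : H) ⊗ₜ[ℂ] R.x)) := by
    rw [Algebra.TensorProduct.tmul_mul_tmul, Algebra.TensorProduct.tmul_mul_tmul,
      one_mul, mul_one, R.rel_xg, TensorProduct.tmul_smul]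
  rw [q_add_pow ω _ _ hcomm s]
  refine Finset.sum_congr rfl fun k _ => ?_
  rw [Algebra.TensorProduct.tmul_pow, Algebra.TensorProduct.tmul_pow, one_pow,
    Algebra.TensorProduct.tmul_mul_tmul, mul_one]

lemma comul_ypow (r : ℕ) :
    Coalgebra.comul (R := ℂ) (R.y ^ r) =
      ∑ i ∈ Finset.range (r + 1),
        qBinom ω⁻¹ r i • ((R.y ^ i) ⊗ₜ[ℂ] (R.g ^ i * R.y ^ (r - i))) := by
  rw [Bialgebra.comul_pow, R.comul_y]
  have hcomm : ((1 : H) ⊗ₜ[ℂ] R.y) * (R.y ⊗ₜ[ℂ] R.g) =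
      ω⁻¹ • ((R.y ⊗ₜ[ℂ] R.g) * ((1 : H) ⊗ₜ[ℂ] R.y)) := by
    rw [Algebra.TensorProduct.tmul_mul_tmul, Algebra.TensorProduct.tmul_mul_tmul,
      one_mul, mul_one, R.rel_gy, TensorProduct.tmul_smul, smul_smul,
      inv_mul_cancel₀ R.omega_ne_zero, one_smul]
  rw [q_add_pow ω⁻¹ _ _ hcomm r]
  refine Finset.sum_congr rfl fun i _ => ?_
  rw [Algebra.TensorProduct.tmul_pow, Algebra.TensorProduct.tmul_pow, one_pow,
    Algebra.TensorProduct.tmul_mul_tmul, mul_one]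

def RB (R : RadfordAlgebra n ω H) (r s l : ℕ) : H := R.y ^ r * R.x ^ s * R.g ^ l

lemma right_factor (i rr k ss l : ℕ) :
    (R.g ^ i * R.y ^ rr) * (R.g ^ k * R.x ^ ss) * R.g ^ l
      = (ω ^ (i * rr) * (ω⁻¹) ^ ((i + k) * ss)) •
          (R.y ^ rr * R.x ^ ss * R.g ^ (i + k + l)) := by
  rw [R.gpow_ypow i rr, smul_mul_assoc, smul_mul_assoc]
  have h1 : (R.y ^ rr * R.g ^ i) * (R.g ^ k * R.x ^ ss) * R.g ^ l
      = R.y ^ rr * (R.g ^ (i+k) * R.x ^ ss) * R.g ^ l := by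
    rw [mul_assoc (R.y ^ rr), ← mul_assoc (R.g ^ i), ← pow_add]
  rw [h1, R.gpow_xpow (i+k) ss, mul_smul_comm, smul_mul_assoc, smul_smul]
  congr 1
  rw [mul_assoc (R.y ^ rr), mul_assoc (R.x ^ ss), ← pow_add, ← mul_assoc]

def Ecoef (ω : ℂ) (r s i k : ℕ) : ℂ :=
  qBinom ω⁻¹ r i * qBinom ω s k * ω ^ (i * (r - i)) * (ω⁻¹) ^ ((i + k) * (s - k))

lemma comul_RB (r s l : ℕ) :
    Coalgebra.comul (R := ℂ) (R.RB r s l) =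
      ∑ i ∈ Finset.range (r+1), ∑ k ∈ Finset.range (s+1),
        Ecoef ω r s i k • ((R.RB i k l) ⊗ₜ[ℂ] (R.RB (r-i) (s-k) (i+k+l))) := by
  show Coalgebra.comul (R := ℂ) (R.y ^ r * R.x ^ s * R.g ^ l) = _
  rw [Bialgebra.comul_mul, Bialgebra.comul_mul, R.comul_ypow, R.comul_xpow, R.comul_gpow,
    Finset.sum_mul, Finset.sum_mul]
  refine Finset.sum_congr rfl fun i _ => ?_
  rw [Finset.mul_sum, Finset.sum_mul]
  refine Finset.sum_congr rfl fun k _ => ?_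
  rw [smul_mul_assoc, smul_mul_assoc, mul_smul_comm, smul_mul_assoc, smul_smul,
    Algebra.TensorProduct.tmul_mul_tmul, Algebra.TensorProduct.tmul_mul_tmul,
    R.right_factor i (r-i) k (s-k) l, TensorProduct.tmul_smul, smul_smul]
  show _ = Ecoef ω r s i k • ((R.y ^ i * R.x ^ k * R.g ^ l) ⊗ₜ[ℂ] _)
  congr 1
  simp only [Ecoef]
  ring

lemma Ecoef_zero_left {r i : ℕ} (h : r < i) (ω : ℂ) (s k : ℕ) : Ecoef ω r s i k = 0 := by
  simp [Ecoef, qBinom_of_lt _ h]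

lemma Ecoef_zero_right {s k : ℕ} (h : s < k) (ω : ℂ) (r i : ℕ) : Ecoef ω r s i k = 0 := by
  simp [Ecoef, qBinom_of_lt _ h]

lemma RB_zero_left {r : ℕ} (hr : n ≤ r) (s l : ℕ) : R.RB r s l = 0 := by
  have : R.y ^ r = 0 := by
    rw [show r = n + (r - n) by omega, pow_add, R.y_pow, zero_mul]
  simp [RB, this]

lemma RB_zero_right {s : ℕ} (hs : n ≤ s) (r l : ℕ) : R.RB r s l = 0 := by
  have : R.x ^ s = 0 := by
    rw [show s = n + (s - n) by omega, pow_add, R.x_pow, zero_mul]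
  simp [RB, this]

lemma RB_eq (r s l : ℕ) (hr : r < n) (hs : s < n) :
    R.RB r s l = R.basis (⟨r, hr⟩, ⟨s, hs⟩, ⟨l % n, Nat.mod_lt l R.npos⟩) := by
  rw [R.basis_eq]
  show R.y ^ r * R.x ^ s * R.g ^ l = _
  rw [R.g_pow_mod l]

lemma coord_RB (w : Fin n × Fin n × Fin n) (r s l : ℕ) :
    R.basis.coord w (R.RB r s l) =
      if ((w.1 : ℕ) = r ∧ (w.2.1 : ℕ) = s ∧ (w.2.2 : ℕ) = l % n) then 1 else 0 := by
  by_cases hr : r < n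
  · by_cases hs : s < n
    · rw [R.RB_eq r s l hr hs, Module.Basis.coord_apply, Module.Basis.repr_self, Finsupp.single_apply]
      refine if_congr ?_ rfl rfl
      constructor
      · rintro rfl; exact ⟨rfl, rfl, rfl⟩
      · rintro ⟨h1, h2, h3⟩
        obtain ⟨w1, w2, w3⟩ := w
        simp only at h1 h2 h3
        ext <;> simp [← h1, ← h2, ← h3]
    · rw [R.RB_zero_right (by omega), map_zero, if_neg]
      rintro ⟨-, h2, -⟩
      exact hs (h2 ▸ (w.2.1).isLt)
  · rw [R.RB_zero_left (by omega), map_zero, if_neg]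
    rintro ⟨h1, -, -⟩
    exact hr (h1 ▸ (w.1).isLt)

def Fco (w₁ w₂ : Fin n × Fin n × Fin n) : H ⊗[ℂ] H →ₗ[ℂ] ℂ :=
  TensorProduct.lift ((LinearMap.mul ℂ ℂ).compl₁₂ (R.basis.coord w₁) (R.basis.coord w₂))

@[simp] lemma Fco_tmul (w₁ w₂ : Fin n × Fin n × Fin n) (u v : H) :
    R.Fco w₁ w₂ (u ⊗ₜ[ℂ] v) = R.basis.coord w₁ u * R.basis.coord w₂ v := rfl

lemma F_comul_basis (w₁ w₂ : Fin n × Fin n × Fin n) (r s l : Fin n) :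
    R.Fco w₁ w₂ (Coalgebra.comul (R := ℂ) (R.basis (r, s, l))) =
      if ((w₁.1 : ℕ) ≤ (r : ℕ) ∧ (w₁.2.1 : ℕ) ≤ (s : ℕ) ∧ (w₁.2.2 : ℕ) = (l : ℕ) ∧
          (w₂.1 : ℕ) = (r : ℕ) - (w₁.1 : ℕ) ∧ (w₂.2.1 : ℕ) = (s : ℕ) - (w₁.2.1 : ℕ) ∧
          (w₂.2.2 : ℕ) = ((w₁.1 : ℕ) + (w₁.2.1 : ℕ) + (l : ℕ)) % n)
      then Ecoef ω r s w₁.1 w₁.2.1 else 0 := by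
  have hb : R.basis (r, s, l) = R.RB r s l := by
    rw [R.basis_eq]; rfl
  rw [hb, R.comul_RB, map_sum]
  simp only [map_sum, map_smul, Fco_tmul, coord_RB]
  rw [Finset.sum_eq_single ((w₁.1 : ℕ))]
  · rw [Finset.sum_eq_single ((w₁.2.1 : ℕ))]
    · have hl : (l : ℕ) % n = (l : ℕ) := Nat.mod_eq_of_lt l.isLt
      rw [hl]
      by_cases h3 : (w₁.2.2 : ℕ) = (l : ℕ)
      · by_cases hcond : ((w₂.1 : ℕ) = (r : ℕ) - (w₁.1 : ℕ) ∧
            (w₂.2.1 : ℕ) = (s : ℕ) - (w₁.2.1 : ℕ) ∧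
            (w₂.2.2 : ℕ) = ((w₁.1 : ℕ) + (w₁.2.1 : ℕ) + (l : ℕ)) % n)
        · rw [if_pos ⟨rfl, rfl, h3⟩, if_pos hcond, one_mul, smul_eq_mul, mul_one]
          by_cases h1 : (w₁.1 : ℕ) ≤ (r : ℕ)
          · by_cases h2 : (w₁.2.1 : ℕ) ≤ (s : ℕ)
            · rw [if_pos ⟨h1, h2, h3, hcond⟩]
            · rw [if_neg (by tauto), Ecoef_zero_right (by omega)]
          · rw [if_neg (by tauto), Ecoef_zero_left (by omega)]
        · rw [if_neg hcond, mul_zero, smul_zero, if_neg (by tauto)]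
      · rw [if_neg (by tauto), zero_mul, smul_zero, if_neg (by tauto)]
    · intro k _ hk
      rw [if_neg (by tauto), zero_mul, smul_zero]
    · intro hk
      rw [Finset.mem_range, not_lt] at hk
      rw [Ecoef_zero_right (by omega), zero_smul]
  · intro i _ hi
    exact Finset.sum_eq_zero fun k _ => by rw [if_neg (by tauto), zero_mul, smul_zero]
  · intro hi
    rw [Finset.mem_range, not_lt] at hi
    exact Finset.sum_eq_zero fun k _ => by rw [Ecoef_zero_left (by omega), zero_smul]

lemma Ecoef_zz (ω : ℂ) (r s : ℕ) : Ecoef ω r s 0 0 = 1 := by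
  simp [Ecoef, qBinom_zero]

def fz (R : RadfordAlgebra n ω H) : Fin n := ⟨0, R.npos⟩

@[simp] lemma fz_val : (R.fz : ℕ) = 0 := rfl

lemma FA (a : Fin n) (w₂ v : Fin n × Fin n × Fin n) :
    R.Fco (R.fz, R.fz, a) w₂ (Coalgebra.comul (R := ℂ) (R.basis v)) =
      if (a = v.2.2 ∧ w₂ = v) then 1 else 0 := by
  obtain ⟨r, s, l⟩ := v
  rw [R.F_comul_basis (R.fz, R.fz, a) w₂ r s l]
  have hl : (l : ℕ) % n = (l : ℕ) := Nat.mod_eq_of_lt l.isLt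
  refine if_congr ?_ (Ecoef_zz ω r s) rfl
  simp only [fz_val, Nat.zero_add, Nat.sub_zero, Nat.zero_le, true_and, hl,
    Prod.ext_iff, Fin.ext_iff]

lemma FB (w₁ : Fin n × Fin n × Fin n) (b : Fin n) (v : Fin n × Fin n × Fin n) :
    R.Fco w₁ (R.fz, R.fz, b) (Coalgebra.comul (R := ℂ) (R.basis v)) =
      if (w₁ = v ∧ (b : ℕ) = ((v.1 : ℕ) + (v.2.1 : ℕ) + (v.2.2 : ℕ)) % n) then 1 else 0 := by
  obtain ⟨r, s, l⟩ := v
  rw [R.F_comul_basis w₁ (R.fz, R.fz, b) r s l]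
  by_cases hcond : (w₁ = (r, s, l) ∧ (b : ℕ) = ((r : ℕ) + (s : ℕ) + (l : ℕ)) % n)
  · obtain ⟨rfl, hb⟩ := hcond
    rw [if_pos ⟨le_refl _, le_refl _, rfl, by simp, by simp, hb⟩,
      if_pos ⟨rfl, hb⟩]
    simp [Ecoef, qBinom_self]
  · rw [if_neg hcond, if_neg]
    rintro ⟨h1, h2, h3, h4, h5, h6⟩
    apply hcond
    simp only [fz_val] at h4 h5
    have e1 : (w₁.1 : ℕ) = (r : ℕ) := by omega
    have e2 : (w₁.2.1 : ℕ) = (s : ℕ) := by omega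
    refine ⟨?_, by rw [← e1, ← e2]; exact h6⟩
    obtain ⟨a1, a2, a3⟩ := w₁
    simp only [Prod.ext_iff, Fin.ext_iff]
    exact ⟨e1, e2, h3⟩

lemma FC (r' s' m j : Fin n) (v : Fin n × Fin n × Fin n) :
    R.Fco (R.fz, s', m) (r', R.fz, j) (Coalgebra.comul (R := ℂ) (R.basis v)) =
      if (v = (r',s',m) ∧ (j : ℕ) = ((s' : ℕ) + (m : ℕ)) % n) then 1 else 0 := by
  obtain ⟨r, s, l⟩ := v
  rw [R.F_comul_basis (R.fz, s', m) (r', R.fz, j) r s l]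
  by_cases hcond : (((r,s,l) : Fin n × Fin n × Fin n) = (r',s',m) ∧
      (j : ℕ) = ((s' : ℕ) + (m : ℕ)) % n)
  · obtain ⟨heq, hj⟩ := hcond
    obtain ⟨rfl, rfl, rfl⟩ : r = r' ∧ s = s' ∧ l = m := by
      simpa [Prod.ext_iff] using heq
    rw [if_pos, if_pos ⟨rfl, hj⟩]
    · simp [Ecoef, qBinom_zero, qBinom_self]
    · exact ⟨by simp, le_refl _, rfl, by simp, by simp, by simpa using hj⟩
  · rw [if_neg hcond, if_neg]
    rintro ⟨h1, h2, h3, h4, h5, h6⟩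
    apply hcond
    simp only [fz_val, Nat.sub_zero, Nat.zero_add] at h2 h3 h4 h5 h6
    have e2 : (s' : ℕ) = (s : ℕ) := by omega
    refine ⟨?_, by rw [h3]; exact h6⟩
    simp only [Prod.ext_iff, Fin.ext_iff]
    exact ⟨h4.symm, e2.symm, h3.symm⟩

lemma counit_basis (v : Fin n × Fin n × Fin n) :
    Coalgebra.counit (R := ℂ) (R.basis v) =
      if ((v.1 : ℕ) = 0 ∧ (v.2.1 : ℕ) = 0) then 1 else 0 := by
  obtain ⟨r, s, l⟩ := v
  rw [R.basis_eq, Bialgebra.counit_mul, Bialgebra.counit_mul, Bialgebra.counit_pow,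
    Bialgebra.counit_pow, Bialgebra.counit_pow, R.counit_x, R.counit_y, R.counit_g, one_pow,
    mul_one, zero_pow_eq, zero_pow_eq]
  by_cases h1 : (r : ℕ) = 0 <;> by_cases h2 : (s : ℕ) = 0 <;> simp [h1, h2]

end RadfordAlgebra

/-- the group-like elements of the Radford algebra `H` are exactly
`{g^l | 0 ≤ l < n}`. -/
theorem radford_grouplike
    {n : ℕ} {ω : ℂ} {H : Type*} [Ring H] [HopfAlgebra ℂ H]
    (R : RadfordAlgebra n ω H) (h : H) :
    (Coalgebra.comul (R := ℂ) h = h ⊗ₜ[ℂ] h ∧ Coalgebra.counit (R := ℂ) h = 1) ↔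
      ∃ l : ℕ, l < n ∧ h = R.g ^ l := by
  constructor
  · rintro ⟨hcom, hcou⟩
    classical
    have hsumT : ∀ (φ : H ⊗[ℂ] H →ₗ[ℂ] ℂ),
        φ (Coalgebra.comul (R := ℂ) h)
          = ∑ v, R.basis.repr h v * φ (Coalgebra.comul (R := ℂ) (R.basis v)) := by
      intro φ
      conv_lhs => rw [← R.basis.sum_repr h]
      simp only [map_sum, map_smul, smul_eq_mul]
    have key : ∀ w₁ w₂ : Fin n × Fin n × Fin n,
        (∑ v, R.basis.repr h v * R.Fco w₁ w₂ (Coalgebra.comul (R := ℂ) (R.basis v)))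
          = R.basis.repr h w₁ * R.basis.repr h w₂ := by
      intro w₁ w₂
      have h2 := hsumT (R.Fco w₁ w₂)
      rw [hcom, R.Fco_tmul, Module.Basis.coord_apply, Module.Basis.coord_apply] at h2
      exact h2.symm
    have eqA : ∀ (a : Fin n) (w₂ : Fin n × Fin n × Fin n),
        (if a = w₂.2.2 then R.basis.repr h w₂ else 0)
          = R.basis.repr h (R.fz, R.fz, a) * R.basis.repr h w₂ := by
      intro a w₂
      have hs2 : (∑ v, R.basis.repr h v
            * R.Fco (R.fz, R.fz, a) w₂ (Coalgebra.comul (R := ℂ) (R.basis v)))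
          = ∑ v : Fin n × Fin n × Fin n,
              if w₂ = v then (if a = v.2.2 then R.basis.repr h v else 0) else 0 :=
        Finset.sum_congr rfl fun v _ => by
          rw [R.FA a w₂ v]
          by_cases h1 : w₂ = v <;> by_cases h2 : a = v.2.2 <;> simp [h1, h2]
      rw [← key (R.fz, R.fz, a) w₂, hs2, Finset.sum_ite_eq, if_pos (Finset.mem_univ w₂)]
    have eqB : ∀ (w₁ : Fin n × Fin n × Fin n) (b : Fin n),
        (if (b : ℕ) = ((w₁.1 : ℕ) + (w₁.2.1 : ℕ) + (w₁.2.2 : ℕ)) % n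
          then R.basis.repr h w₁ else 0)
          = R.basis.repr h w₁ * R.basis.repr h (R.fz, R.fz, b) := by
      intro w₁ b
      have hs2 : (∑ v, R.basis.repr h v
            * R.Fco w₁ (R.fz, R.fz, b) (Coalgebra.comul (R := ℂ) (R.basis v)))
          = ∑ v : Fin n × Fin n × Fin n,
              if w₁ = v then
                (if (b : ℕ) = ((v.1 : ℕ) + (v.2.1 : ℕ) + (v.2.2 : ℕ)) % n
                  then R.basis.repr h v else 0) else 0 :=
        Finset.sum_congr rfl fun v _ => by
          rw [R.FB w₁ b v]
          by_cases h1 : w₁ = v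
          · subst h1
            by_cases h2 : (b : ℕ) = ((w₁.1 : ℕ) + (w₁.2.1 : ℕ) + (w₁.2.2 : ℕ)) % n <;>
              simp [h2]
          · simp [h1]
      rw [← key w₁ (R.fz, R.fz, b), hs2, Finset.sum_ite_eq, if_pos (Finset.mem_univ w₁)]
    have eqC : ∀ (r' s' m j : Fin n),
        (if (j : ℕ) = ((s' : ℕ) + (m : ℕ)) % n then R.basis.repr h (r', s', m) else 0)
          = R.basis.repr h (R.fz, s', m) * R.basis.repr h (r', R.fz, j) := by
      intro r' s' m j
      have hs2 : (∑ v, R.basis.repr h v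
            * R.Fco (R.fz, s', m) (r', R.fz, j) (Coalgebra.comul (R := ℂ) (R.basis v)))
          = ∑ v : Fin n × Fin n × Fin n,
              if v = (r', s', m) then
                (if (j : ℕ) = ((s' : ℕ) + (m : ℕ)) % n then R.basis.repr h v else 0) else 0 :=
        Finset.sum_congr rfl fun v _ => by
          rw [R.FC r' s' m j v]
          by_cases h1 : v = (r', s', m)
          · subst h1
            by_cases h2 : (j : ℕ) = ((s' : ℕ) + (m : ℕ)) % n <;> simp [h2]
          · simp [h1]
      rw [← key (R.fz, s', m) (r', R.fz, j), hs2, Finset.sum_ite_eq',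
        if_pos (Finset.mem_univ _)]
    have hsumE : ∀ (φ : H →ₗ[ℂ] ℂ),
        φ h = ∑ v, R.basis.repr h v * φ (R.basis v) := by
      intro φ
      conv_lhs => rw [← R.basis.sum_repr h]
      simp only [map_sum, map_smul, smul_eq_mul]
    have hred : (∑ v : Fin n × Fin n × Fin n,
          R.basis.repr h v * (if ((v.1 : ℕ) = 0 ∧ (v.2.1 : ℕ) = 0) then (1 : ℂ) else 0))
        = ∑ l : Fin n, R.basis.repr h (R.fz, R.fz, l) := by
      rw [Fintype.sum_prod_type]
      rw [Finset.sum_eq_single R.fz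
        (fun r _ hr => Finset.sum_eq_zero fun p _ => by
          rw [if_neg, mul_zero]
          rintro ⟨h1, -⟩
          exact hr (Fin.ext (by simpa using h1)))
        (fun habs => absurd (Finset.mem_univ _) habs)]
      rw [Fintype.sum_prod_type]
      rw [Finset.sum_eq_single R.fz
        (fun s _ hs => Finset.sum_eq_zero fun l _ => by
          rw [if_neg, mul_zero]
          rintro ⟨-, h2⟩
          exact hs (Fin.ext (by simpa using h2)))
        (fun habs => absurd (Finset.mem_univ _) habs)]
      refine Finset.sum_congr rfl fun l _ => ?_
      rw [if_pos ⟨rfl, rfl⟩, mul_one]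
    have hcsum : (∑ l : Fin n, R.basis.repr h (R.fz, R.fz, l)) = 1 := by
      have h1 := hsumE (Coalgebra.counit (R := ℂ))
      rw [hcou] at h1
      simp only [R.counit_basis] at h1
      rw [hred] at h1
      exact h1.symm
    obtain ⟨l₀, hl₀⟩ : ∃ l, R.basis.repr h (R.fz, R.fz, l) ≠ 0 := by
      by_contra hno
      push_neg at hno
      rw [Finset.sum_eq_zero (fun l _ => hno l)] at hcsum
      exact zero_ne_one hcsum
    have hz : ∀ m, m ≠ l₀ → R.basis.repr h (R.fz, R.fz, m) = 0 := by
      intro m hm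
      have h2 := eqA l₀ (R.fz, R.fz, m)
      rw [if_neg (fun hEq => hm (by exact hEq.symm))] at h2
      rcases mul_eq_zero.mp h2.symm with h3 | h3
      · exact absurd h3 hl₀
      · exact h3
    have hc1 : R.basis.repr h (R.fz, R.fz, l₀) = 1 := by
      calc R.basis.repr h (R.fz, R.fz, l₀)
          = ∑ l : Fin n, R.basis.repr h (R.fz, R.fz, l) :=
            (Finset.sum_eq_single l₀ (fun m _ hm => hz m hm)
              (fun habs => absurd (Finset.mem_univ _) habs)).symm
        _ = 1 := hcsum
    have hmod : ∀ (t : ℕ) (m : Fin n), t ≠ 0 → t < n → ¬((m : ℕ) = (t + (m : ℕ)) % n) := by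
      intro t m ht htn hEq
      rcases Nat.lt_or_ge (t + (m : ℕ)) n with hlt | hge
      · rw [Nat.mod_eq_of_lt hlt] at hEq; omega
      · have hm2 : t + (m : ℕ) - n < n := by have := m.isLt; omega
        rw [Nat.mod_eq_sub_mod hge, Nat.mod_eq_of_lt hm2] at hEq
        have := m.isLt; omega
    have hB0 : ∀ (r' s' : Fin n),
        ¬((l₀ : ℕ) = ((r' : ℕ) + (s' : ℕ) + (l₀ : ℕ)) % n) → R.basis.repr h (r', s', l₀) = 0 := by
      intro r' s' hcond
      have h2 := eqB (r', s', l₀) l₀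
      rw [if_neg hcond, hc1, mul_one] at h2
      exact h2.symm
    have hvz : ∀ v : Fin n × Fin n × Fin n, v ≠ (R.fz, R.fz, l₀) → R.basis.repr h v = 0 := by
      rintro ⟨r, s, l⟩ hv
      by_cases hl : l = l₀
      · subst hl
        by_cases hs : s = R.fz
        · have hr : r ≠ R.fz := fun hEq => hv (by rw [hEq, hs])
          subst hs
          apply hB0
          have hr' : (r : ℕ) ≠ 0 := fun hEq => hr (Fin.ext (by simpa using hEq))
          have := hmod (r : ℕ) l hr' r.isLt
          simpa using this
        · have hs' : (s : ℕ) ≠ 0 := fun hEq => hs (Fin.ext (by simpa using hEq))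
          have hcs : R.basis.repr h (R.fz, s, l) = 0 := by
            apply hB0
            have := hmod (s : ℕ) l hs' s.isLt
            simpa using this
          by_cases hr : r = R.fz
          · subst hr; exact hcs
          · have h2 := eqC r s l ⟨((s : ℕ) + (l : ℕ)) % n, Nat.mod_lt _ R.npos⟩
            rw [if_pos rfl, hcs, zero_mul] at h2
            exact h2
      · have h2 := eqA l (r, s, l)
        rw [if_pos rfl, hz l hl, zero_mul] at h2
        exact h2
    refine ⟨(l₀ : ℕ), l₀.isLt, ?_⟩
    have hh : h = R.basis (R.fz, R.fz, l₀) := by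
      conv_lhs => rw [← R.basis.sum_repr h]
      rw [Finset.sum_eq_single (R.fz, R.fz, l₀)
        (fun v _ hv => by rw [hvz v hv, zero_smul])
        (fun habs => absurd (Finset.mem_univ _) habs)]
      rw [hc1, one_smul]
    rw [hh, R.basis_eq]
    simp
  · rintro ⟨l, hl, rfl⟩
    exact ⟨R.comul_gpow l, by rw [Bialgebra.counit_pow, R.counit_g, one_pow]⟩
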